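/- For N ≥ 1 and s ∈ (0, N/2), let κ_{N,s} = 2^{-2s}·π^{-s}·(Γ((N-2s)/2)/Γ((N+2s)/2))·(Γ(N)/Γ(N/2))^{2s/N} be the best fractional Sobolev constant. Then lim_{s→0⁺} κ_{N,s} = 1 and lim_{s→0⁺} κ_{N,s}^{1/s} = (1/(4π))·(Γ(N)/Γ(N/2))^{2/N}·e^{-2ψ(N/2)}, where ψ = Γ'/Γ is the digamma function. -/

import Mathlib

open Real Filter

/-- The digamma function `ψ = Γ'/Γ`. -/
noncomputable def digamma (x : ℝ) : ℝ := deriv Real.Gamma x / Real.Gamma x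

/-- Asymptotics of the best fractional Sobolev constant `κ_{N,s}` as `s → 0⁺`:
`κ_{N,s} → 1` and `κ_{N,s}^{1/s} → (1/(4π)) (Γ(N)/Γ(N/2))^{2/N} e^{-2ψ(N/2)}`. -/
theorem stmt4 (N : ℕ) (hN : 1 ≤ N) :
    Tendsto (fun s : ℝ => (2:ℝ) ^ (-(2*s)) * Real.pi ^ (-s) *
        (Real.Gamma ((N - 2*s)/2) / Real.Gamma ((N + 2*s)/2)) *
        (Real.Gamma N / Real.Gamma (N/2)) ^ (2*s/N))
      (nhdsWithin 0 (Set.Ioi 0)) (nhds 1)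
    ∧ Tendsto (fun s : ℝ => ((2:ℝ) ^ (-(2*s)) * Real.pi ^ (-s) *
        (Real.Gamma ((N - 2*s)/2) / Real.Gamma ((N + 2*s)/2)) *
        (Real.Gamma N / Real.Gamma (N/2)) ^ (2*s/N)) ^ (1/s))
      (nhdsWithin 0 (Set.Ioi 0))
      (nhds (1/(4*Real.pi) * (Real.Gamma N / Real.Gamma (N/2)) ^ ((2:ℝ)/N) *
        Real.exp (-2 * digamma (N/2)))) := by
  have hNpos : (0:ℝ) < N := by exact_mod_cast Nat.pos_of_ne_zero (by omega)
  have hA : (0:ℝ) < (N:ℝ)/2 := by linarith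
  have hΓA : 0 < Real.Gamma ((N:ℝ)/2) := Real.Gamma_pos_of_pos hA
  have hΓN : 0 < Real.Gamma (N:ℝ) := Real.Gamma_pos_of_pos hNpos
  have hr : 0 < Real.Gamma (N:ℝ) / Real.Gamma ((N:ℝ)/2) := div_pos hΓN hΓA
  set c := Real.log (Real.Gamma (N:ℝ) / Real.Gamma ((N:ℝ)/2)) with hc
  set F : ℝ → ℝ := fun s => -(2*s)*Real.log 2 + (-s)*Real.log Real.pi +
    (Real.log (Real.Gamma (((N:ℝ) - 2*s)/2)) - Real.log (Real.Gamma (((N:ℝ) + 2*s)/2))) +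
    (2*s/(N:ℝ))*c with hF
  set κ : ℝ → ℝ := fun s => (2:ℝ) ^ (-(2*s)) * Real.pi ^ (-s) *
        (Real.Gamma ((N - 2*s)/2) / Real.Gamma ((N + 2*s)/2)) *
        (Real.Gamma N / Real.Gamma (N/2)) ^ (2*s/N) with hκ
  -- κ = exp ∘ F on (0, N/4)
  have key : ∀ s ∈ Set.Ioo (0:ℝ) ((N:ℝ)/4), κ s = Real.exp (F s) := by
    intro s hs
    obtain ⟨hs1, hs2⟩ := hs
    have h1 : (0:ℝ) < ((N:ℝ) - 2*s)/2 := by linarith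
    have h2 : (0:ℝ) < ((N:ℝ) + 2*s)/2 := by linarith
    have hΓ1 := Real.Gamma_pos_of_pos h1
    have hΓ2 := Real.Gamma_pos_of_pos h2
    have e1 : (2:ℝ)^(-(2*s)) = Real.exp (-(2*s)*Real.log 2) := by
      rw [Real.rpow_def_of_pos two_pos, mul_comm]
    have e2 : Real.pi^(-s) = Real.exp ((-s)*Real.log Real.pi) := by
      rw [Real.rpow_def_of_pos Real.pi_pos, mul_comm]
    have e3 : Real.Gamma (((N:ℝ) - 2*s)/2) / Real.Gamma (((N:ℝ) + 2*s)/2)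
        = Real.exp (Real.log (Real.Gamma (((N:ℝ) - 2*s)/2))
          - Real.log (Real.Gamma (((N:ℝ) + 2*s)/2))) := by
      rw [Real.exp_sub, Real.exp_log hΓ1, Real.exp_log hΓ2]
    have e4 : (Real.Gamma (N:ℝ) / Real.Gamma ((N:ℝ)/2))^(2*s/(N:ℝ))
        = Real.exp ((2*s/(N:ℝ))*c) := by
      rw [Real.rpow_def_of_pos hr, mul_comm]
    simp only [hκ, hF]
    rw [e1, e2, e3, e4, ← Real.exp_add, ← Real.exp_add, ← Real.exp_add]
  have hmem : Set.Ioo (0:ℝ) ((N:ℝ)/4) ∈ nhdsWithin (0:ℝ) (Set.Ioi 0) :=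
    Ioo_mem_nhdsGT_of_mem (by constructor <;> [rfl; positivity])
  have heq : ∀ᶠ s in nhdsWithin (0:ℝ) (Set.Ioi 0), κ s = Real.exp (F s) :=
    Filter.eventually_of_mem hmem key
  -- derivative of F at 0
  have hΓdiff : DifferentiableAt ℝ Real.Gamma ((N:ℝ)/2) := by
    apply Real.differentiableAt_Gamma
    intro m
    have : (0:ℝ) ≤ m := Nat.cast_nonneg m
    exact ne_of_gt (by linarith)
  have hlogΓ : HasDerivAt (fun x => Real.log (Real.Gamma x)) (digamma ((N:ℝ)/2)) ((N:ℝ)/2) := by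
    have := (Real.hasDerivAt_log hΓA.ne').comp ((N:ℝ)/2) hΓdiff.hasDerivAt
    simpa [digamma, div_eq_inv_mul, Function.comp_def] using this
  have hg1 : HasDerivAt (fun s : ℝ => ((N:ℝ) - 2*s)/2) (-1) 0 := by
    have : HasDerivAt (fun s : ℝ => ((N:ℝ) - 2*s)/2) (-(2*1)/2) 0 :=
      (((hasDerivAt_id 0).const_mul 2).const_sub (N:ℝ)).div_const 2
    simpa using this
  have hg2 : HasDerivAt (fun s : ℝ => ((N:ℝ) + 2*s)/2) 1 0 := by
    have : HasDerivAt (fun s : ℝ => ((N:ℝ) + 2*s)/2) ((2*1)/2) 0 :=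
      (((hasDerivAt_id 0).const_mul 2).const_add (N:ℝ)).div_const 2
    simpa using this
  have hL1 : HasDerivAt (fun s : ℝ => Real.log (Real.Gamma (((N:ℝ) - 2*s)/2)))
      (digamma ((N:ℝ)/2) * (-1)) 0 := by
    have h := hlogΓ.comp_of_eq 0 hg1 (by norm_num)
    simpa [Function.comp_def] using h
  have hL2 : HasDerivAt (fun s : ℝ => Real.log (Real.Gamma (((N:ℝ) + 2*s)/2)))
      (digamma ((N:ℝ)/2) * 1) 0 := by
    have h := hlogΓ.comp_of_eq 0 hg2 (by norm_num)
    simpa [Function.comp_def] using h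
  have p1 : HasDerivAt (fun s : ℝ => -(2*s)*Real.log 2) (-(2*1)*Real.log 2) 0 :=
    ((hasDerivAt_id 0).const_mul 2).neg.mul_const _
  have p2 : HasDerivAt (fun s : ℝ => (-s)*Real.log Real.pi) (-1*Real.log Real.pi) 0 := by
    simpa using (hasDerivAt_id (0:ℝ)).neg.mul_const (Real.log Real.pi)
  have p4 : HasDerivAt (fun s : ℝ => (2*s/(N:ℝ))*c) ((2*1/(N:ℝ))*c) 0 :=
    (((hasDerivAt_id 0).const_mul 2).div_const (N:ℝ)).mul_const c
  set L : ℝ := -(2*1)*Real.log 2 + -1*Real.log Real.pi +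
    (digamma ((N:ℝ)/2) * (-1) - digamma ((N:ℝ)/2) * 1) + (2*1/(N:ℝ))*c with hLdef
  have hFd : HasDerivAt F L 0 := ((p1.add p2).add (hL1.sub hL2)).add p4
  have hF0 : F 0 = 0 := by
    simp only [hF]
    norm_num
  -- exp L equals the target
  have hexpL : Real.exp L = 1/(4*Real.pi) * (Real.Gamma N / Real.Gamma (N/2)) ^ ((2:ℝ)/N) *
      Real.exp (-2 * digamma (N/2)) := by
    rw [Real.rpow_def_of_pos hr]
    rw [hLdef]
    rw [show -(2*1)*Real.log 2 + -1*Real.log Real.pi +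
      (digamma ((N:ℝ)/2) * (-1) - digamma ((N:ℝ)/2) * 1) + (2*1/(N:ℝ))*c
      = -(Real.log 2 + Real.log 2 + Real.log Real.pi) + (c * (2/(N:ℝ)) + (-2 * digamma ((N:ℝ)/2)))
      from by ring]
    rw [Real.exp_add, Real.exp_neg, Real.exp_add, Real.exp_add, Real.exp_add,
        Real.exp_log two_pos, Real.exp_log Real.pi_pos]
    ring
  constructor
  · refine Tendsto.congr' (Filter.eventually_of_mem hmem (fun s hs => (key s hs).symm)) ?_
    have : Tendsto F (nhdsWithin (0:ℝ) (Set.Ioi 0)) (nhds 0) := by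
      have := hFd.continuousAt.tendsto
      rw [hF0] at this
      exact this.mono_left nhdsWithin_le_nhds
    simpa [Function.comp_def] using (Real.continuous_exp.tendsto 0).comp this
  · have hslope : Tendsto (fun s => F s / s) (nhdsWithin (0:ℝ) (Set.Ioi 0)) (nhds L) := by
      have h := hasDerivAt_iff_tendsto_slope.mp hFd
      have hsub : nhdsWithin (0:ℝ) (Set.Ioi 0) ≤ nhdsWithin (0:ℝ) {(0:ℝ)}ᶜ :=
        nhdsWithin_mono _ (fun x hx => ne_of_gt hx)
      refine (h.mono_left hsub).congr' ?_
      filter_upwards [self_mem_nhdsWithin] with s hs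
      simp [slope, hF0, div_eq_inv_mul]
    have hcomp : Tendsto (fun s => Real.exp (F s / s)) (nhdsWithin (0:ℝ) (Set.Ioi 0))
        (nhds (Real.exp L)) := (Real.continuous_exp.tendsto L).comp hslope
    rw [hexpL] at hcomp
    refine hcomp.congr' ?_
    filter_upwards [heq, self_mem_nhdsWithin] with s hs hs'
    show Real.exp (F s / s) = κ s ^ (1/s)
    rw [hs, Real.rpow_def_of_pos (Real.exp_pos _), Real.log_exp, mul_one_div]
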